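/- Let X ~ χ²_d (chi-squared with d degrees of freedom). Then for all t > 0, Pr(X ≥ d + 2√(dt) + 2t) ≤ exp(-t). -/

import Mathlib

open MeasureTheory ProbabilityTheory Real Filter
open scoped ENNReal NNReal

lemma log_le_half_sub_inv {y : ℝ} (hy : 1 ≤ y) : Real.log y ≤ (y - y⁻¹) / 2 := by
  set f : ℝ → ℝ := fun x => (x - x⁻¹) / 2 - Real.log x with hf
  have key : MonotoneOn f (Set.Ici 1) := by
    have hderiv : ∀ x ∈ interior (Set.Ici (1:ℝ)),
        HasDerivAt f ((1 - x⁻¹)^2 / 2) x := by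
      intro x hx
      rw [interior_Ici] at hx
      have hx0 : x ≠ 0 := by rw [Set.mem_Ioi] at hx; linarith
      have h1 : HasDerivAt (fun x : ℝ => (x - x⁻¹) / 2) ((1 - -(x^2)⁻¹) / 2) x :=
        ((hasDerivAt_id x).sub (hasDerivAt_inv hx0)).div_const 2
      have h2 : HasDerivAt f ((1 - -(x^2)⁻¹) / 2 - x⁻¹) x :=
        h1.sub (Real.hasDerivAt_log hx0)
      convert h2 using 1
      field_simp
      ring
    apply monotoneOn_of_deriv_nonneg (convex_Ici 1)
    · apply ContinuousOn.sub (ContinuousOn.div_const (continuousOn_id.sub ?_) 2)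
      · exact Real.continuousOn_log.mono (by intro x hx; simp at hx ⊢; linarith)
      · exact continuousOn_inv₀.mono (by intro x hx; simp at hx ⊢; linarith)
    · intro x hx
      exact (hderiv x hx).differentiableAt.differentiableWithinAt
    · intro x hx
      rw [(hderiv x hx).deriv]
      positivity
  have h0 : f 1 ≤ f y := key (by simp) hy hy
  simp only [hf] at h0
  norm_num at h0
  linarith

lemma gauss_density_integral (g : ℝ → ℝ) :
    ∫ x, g x ∂(gaussianReal 0 1) = ∫ x, gaussianPDFReal 0 1 x * g x := by
  rw [gaussianReal_of_var_ne_zero 0 one_ne_zero]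
  have h : gaussianPDF 0 1 = fun x => (((gaussianPDFReal 0 1 x).toNNReal : ℝ≥0) : ℝ≥0∞) := rfl
  rw [h, integral_withDensity_eq_integral_smul
    (measurable_gaussianPDFReal 0 1).real_toNNReal g]
  congr 1
  ext x
  rw [NNReal.smul_def, Real.coe_toNNReal _ (gaussianPDFReal_nonneg 0 1 x), smul_eq_mul]

lemma gauss_pdf_mul_exp (l : ℝ) (x : ℝ) :
    gaussianPDFReal 0 1 x * Real.exp (l * x^2)
      = (Real.sqrt (2 * π))⁻¹ * Real.exp (-(1/2 - l) * x^2) := by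
  rw [gaussianPDFReal]
  simp only [NNReal.coe_one, mul_one, sub_zero]
  rw [mul_assoc, ← Real.exp_add]
  congr 2
  ring

lemma integrable_exp_mul_sq_gaussian {l : ℝ} (hl : l < 1/2) :
    Integrable (fun x => Real.exp (l * x^2)) (gaussianReal 0 1) := by
  rw [gaussianReal_of_var_ne_zero 0 one_ne_zero]
  have hpdf : Measurable (gaussianPDF 0 1) := measurable_gaussianPDF 0 1
  rw [integrable_withDensity_iff_integrable_smul' hpdf
    (ae_of_all _ fun x => ENNReal.ofReal_lt_top)]
  have h : (fun x => (gaussianPDF 0 1 x).toReal • Real.exp (l * x^2))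
      = fun x => (Real.sqrt (2 * π))⁻¹ * Real.exp (-(1/2 - l) * x^2) := by
    ext x
    rw [gaussianPDF, ENNReal.toReal_ofReal (gaussianPDFReal_nonneg 0 1 x), smul_eq_mul,
      gauss_pdf_mul_exp]
  rw [h]
  exact (integrable_exp_neg_mul_sq (by linarith)).const_mul _

lemma integral_exp_mul_sq_gaussian {l : ℝ} (hl : l < 1/2) :
    ∫ x, Real.exp (l * x^2) ∂(gaussianReal 0 1) = (Real.sqrt (1 - 2*l))⁻¹ := by
  rw [gauss_density_integral]
  simp_rw [gauss_pdf_mul_exp]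
  rw [integral_const_mul, integral_gaussian]
  rw [← Real.sqrt_inv, ← Real.sqrt_mul (by positivity), ← Real.sqrt_inv]
  congr 1
  have h2 : (0:ℝ) < 1/2 - l := by linarith
  have hπ : (0:ℝ) < π := pi_pos
  have hne : (1:ℝ)/2 - l ≠ 0 := ne_of_gt h2
  have h3 : (1:ℝ) - 2*l ≠ 0 := by linarith
  field_simp

/-- Laurent–Massart upper tail bound for the chi-squared distribution: if
`X = Σ_{i=1}^d Z_i²` with `Z_i` i.i.d. standard normal, then for all `t > 0`,
`Pr(X ≥ d + 2√(dt) + 2t) ≤ exp(-t)`. -/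
theorem chi_squared_tail_bound (d : ℕ) {Ω : Type*} [MeasureSpace Ω]
    [IsProbabilityMeasure (ℙ : Measure Ω)] (Z : Fin d → Ω → ℝ)
    (hmeas : ∀ i, Measurable (Z i))
    (hindep : iIndepFun Z ℙ)
    (hlaw : ∀ i, Measure.map (Z i) ℙ = gaussianReal 0 1)
    (t : ℝ) (ht : 0 < t) :
    ℙ {ω | (d : ℝ) + 2 * Real.sqrt (d * t) + 2 * t ≤ ∑ i, (Z i ω) ^ 2} ≤
      ENNReal.ofReal (Real.exp (-t)) := by
  rcases Nat.eq_zero_or_pos d with hd | hd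
  · subst hd
    have hempty : {ω : Ω | ((0:ℕ) : ℝ) + 2 * Real.sqrt ((0:ℕ) * t) + 2 * t
        ≤ ∑ i : Fin 0, (Z i ω) ^ 2} = ∅ := by
      ext ω
      simp only [Set.mem_setOf_eq, Set.mem_empty_iff_false, iff_false, not_le,
        Nat.cast_zero, zero_mul, Real.sqrt_zero, Finset.univ_eq_empty, Finset.sum_empty]
      linarith
    rw [hempty]
    simp
  -- main case
  set sd := Real.sqrt d with hsd_def
  set st := Real.sqrt t with hst_def
  have hsd : 0 < sd := Real.sqrt_pos.mpr (by exact_mod_cast hd)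
  have hst : 0 < st := Real.sqrt_pos.mpr ht
  have hsd2 : sd^2 = (d:ℝ) := Real.sq_sqrt (by positivity)
  have hst2 : st^2 = t := Real.sq_sqrt ht.le
  have hden : 0 < sd + 2*st := by linarith
  set l := st / (sd + 2*st) with hl_def
  have hl0 : 0 < l := div_pos hst hden
  have hl : l < 1/2 := by
    rw [hl_def, div_lt_iff₀ hden]
    linarith
  have h12l : 1 - 2*l = sd / (sd + 2*st) := by
    rw [hl_def]
    field_simp
    ring
  have h12lpos : 0 < 1 - 2*l := by rw [h12l]; positivity
  set a := (d:ℝ) + 2 * Real.sqrt (d * t) + 2 * t with ha_def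
  have hdt : Real.sqrt ((d:ℝ) * t) = sd * st := Real.sqrt_mul (by positivity) t
  set Y : Fin d → Ω → ℝ := fun i ω => (Z i ω)^2 with hY_def
  have hYmeas : ∀ i, Measurable (Y i) := fun i => (hmeas i).pow_const 2
  have hYindep : iIndepFun Y ℙ :=
    hindep.comp (fun _ x => x^2) (fun _ => measurable_id.pow_const 2)
  have hint : ∀ i, Integrable (fun ω => Real.exp (l * Y i ω)) ℙ := by
    intro i
    have h1 : Integrable (fun x => Real.exp (l * x^2)) (Measure.map (Z i) ℙ) := by
      rw [hlaw i]; exact integrable_exp_mul_sq_gaussian hl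
    exact h1.comp_aemeasurable (hmeas i).aemeasurable
  have hmgf : ∀ i, mgf (Y i) ℙ l = (Real.sqrt (1 - 2*l))⁻¹ := by
    intro i
    have h2 : mgf (Y i) ℙ l = ∫ x, Real.exp (l * x^2) ∂(Measure.map (Z i) ℙ) := by
      rw [mgf, integral_map (hmeas i).aemeasurable]
      exact (((measurable_id.pow_const 2).const_mul l).exp).aestronglyMeasurable
    rw [h2, hlaw i, integral_exp_mul_sq_gaussian hl]
  have hsum_int : Integrable (fun ω => Real.exp (l * (∑ i, Y i) ω)) ℙ :=
    hYindep.integrable_exp_mul_sum hYmeas (fun i _ => hint i)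
  have hchern := measure_ge_le_exp_mul_mgf (μ := ℙ) (X := ∑ i, Y i) a hl0.le hsum_int
  have hmgfsum : mgf (∑ i, Y i) ℙ l = ((Real.sqrt (1 - 2*l))⁻¹)^d := by
    rw [hYindep.mgf_sum hYmeas]
    simp [hmgf]
  have hset : {ω : Ω | a ≤ (∑ i, Y i) ω}
      = {ω : Ω | (d : ℝ) + 2 * Real.sqrt (d * t) + 2 * t ≤ ∑ i, (Z i ω) ^ 2} := by
    ext ω
    simp [Finset.sum_apply, ha_def, hY_def]
  -- final analytic bound
  set y := (sd + 2*st)/sd with hy_def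
  have hy1 : (1:ℝ) ≤ y := by
    rw [hy_def, le_div_iff₀ hsd]
    linarith
  have hy0 : 0 < y := lt_of_lt_of_le one_pos hy1
  have hlog : Real.log y ≤ (y - y⁻¹)/2 := log_le_half_sub_inv hy1
  have hinv : 1 - 2*l = y⁻¹ := by
    rw [h12l, hy_def]
    field_simp
  have hsq : (Real.sqrt (1 - 2*l))⁻¹ = Real.exp (-(1/2) * Real.log (1 - 2*l)) := by
    rw [Real.sqrt_eq_rpow, ← Real.rpow_neg h12lpos.le, Real.rpow_def_of_pos h12lpos]
    ring_nf
  have hpow : ((Real.sqrt (1 - 2*l))⁻¹)^d = Real.exp ((d:ℝ) * (-(1/2) * Real.log (1 - 2*l))) := by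
    rw [hsq, ← Real.exp_nat_mul]
  have hlog12l : Real.log (1 - 2*l) = - Real.log y := by
    rw [hinv, Real.log_inv]
  have heq : (d:ℝ)/2 * ((y - y⁻¹)/2) = l * a - t := by
    have ha' : a = sd^2 + 2*sd*st + 2*st^2 := by
      rw [ha_def, hdt, hsd2, hst2]
      ring
    rw [ha', hl_def, hy_def, ← hsd2, ← hst2]
    have h1 : sd ≠ 0 := ne_of_gt hsd
    have h2 : sd + 2*st ≠ 0 := ne_of_gt hden
    field_simp
    ring
  have hbound : Real.exp (-l * a) * ((Real.sqrt (1 - 2*l))⁻¹)^d ≤ Real.exp (-t) := by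
    rw [hpow, ← Real.exp_add, Real.exp_le_exp, hlog12l]
    have h3 : (d:ℝ)/2 * Real.log y ≤ (d:ℝ)/2 * ((y - y⁻¹)/2) := by
      apply mul_le_mul_of_nonneg_left hlog
      positivity
    nlinarith [heq]
  rw [← hset]
  rw [ENNReal.le_ofReal_iff_toReal_le (measure_ne_top _ _) (Real.exp_nonneg _)]
  calc (ℙ {ω : Ω | a ≤ (∑ i, Y i) ω}).toReal
      ≤ Real.exp (-l * a) * mgf (∑ i, Y i) ℙ l := hchern
    _ = Real.exp (-l * a) * ((Real.sqrt (1 - 2*l))⁻¹)^d := by rw [hmgfsum]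
    _ ≤ Real.exp (-t) := hbound
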